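/- For n ≥ 2 and even k ≥ 4, if x and y are vertices of the k-ary n-cube Q_n^k with different parities p(x) ≠ p(y), then there is a Hamiltonian path from x to y in Q_n^k. -/

import Mathlib

open SimpleGraph List

set_option linter.unusedSectionVars false
set_option linter.unusedVariables false
set_option maxHeartbeats 1600000

/-- The `k`-ary `n`-cube: vertices are `n`-tuples over `ZMod k`; two vertices are
adjacent iff they differ in exactly one coordinate, and there by `±1` (mod `k`). -/
def karyCube (n k : ℕ) : SimpleGraph (Fin n → ZMod k) where
  Adj u v := u ≠ v ∧ ∃ j, (u j = v j + 1 ∨ v j = u j + 1) ∧ ∀ i, i ≠ j → u i = v i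
  symm := by
    constructor
    rintro u v ⟨hne, j, hj, hrest⟩
    exact ⟨hne.symm, j, hj.symm, fun i hi => (hrest i hi).symm⟩
  loopless := ⟨fun u h => h.1 rfl⟩

/-- Parity of a vertex: the mod 2 sum of its coordinates (via representatives in {0,…,k-1}). -/
def parity {n k : ℕ} (u : Fin n → ZMod k) : ZMod 2 :=
  ((∑ i, (u i).val : ℕ) : ZMod 2)

/-- `M` is a matching in `G`: a set of edges of `G` that are pairwise vertex-disjoint. -/
def IsMatchingIn {V : Type*} (G : SimpleGraph V) (M : Finset (Sym2 V)) : Prop :=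
  (↑M : Set (Sym2 V)) ⊆ G.edgeSet ∧
    ∀ e ∈ M, ∀ f ∈ M, e ≠ f → ∀ v : V, v ∈ e → v ∉ f



section Machinery
variable {V : Type*} {W : Type*} [DecidableEq V] [DecidableEq W]

structure HamList (G : SimpleGraph V) (x y : V) (L : List V) : Prop where
  chain : L.IsChain G.Adj
  nodup : L.Nodup
  cover : ∀ v, v ∈ L
  hhead : L.head? = some x
  hlast : L.getLast? = some y

lemma exists_walk_aux {G : SimpleGraph V} :
    ∀ (L : List V) (x y : V), L.IsChain G.Adj → L.head? = some x → L.getLast? = some y →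
    ∃ w : G.Walk x y, w.support = L
  | [], x, y, _, h, _ => by simp at h
  | [a], x, y, _, hh, hl => by
      simp only [List.head?_cons, Option.some.injEq] at hh
      simp only [List.getLast?_singleton, Option.some.injEq] at hl
      subst hh; subst hl
      exact ⟨SimpleGraph.Walk.nil, rfl⟩
  | a :: b :: t, x, y, hc, hh, hl => by
      simp only [List.head?_cons, Option.some.injEq] at hh
      subst hh
      rw [List.isChain_cons_cons] at hc
      obtain ⟨w', hw'⟩ := exists_walk_aux (b :: t) b y hc.2 rfl
        (by rw [List.getLast?_cons_cons] at hl; exact hl)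
      exact ⟨SimpleGraph.Walk.cons hc.1 w', by simp [hw']⟩

lemma HamList.toWalk {G : SimpleGraph V} {x y : V} {L : List V} (h : HamList G x y L) :
    ∃ p : G.Walk x y, p.IsPath ∧ p.IsHamiltonian := by
  obtain ⟨w, hw⟩ := exists_walk_aux L x y h.chain h.hhead h.hlast
  refine ⟨w, SimpleGraph.Walk.IsPath.mk' (hw ▸ h.nodup), fun v => ?_⟩
  rw [hw]; exact List.count_eq_one_of_mem h.nodup (h.cover v)

def Lace (G : SimpleGraph V) (π : V → ZMod 2) : Prop :=
  ∀ x y : V, π x ≠ π y → ∃ L, HamList G x y L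

lemma Lace.transport {G : SimpleGraph V} {G' : SimpleGraph W} (e : V ≃ W)
    (hadj : ∀ u v, G.Adj u v ↔ G'.Adj (e u) (e v))
    {π : V → ZMod 2} {π' : W → ZMod 2} (hπ : ∀ v, π' (e v) = π v)
    (h : Lace G π) : Lace G' π' := by
  intro x y hxy
  obtain ⟨L, hL⟩ := h (e.symm x) (e.symm y) (by
    rw [← hπ (e.symm x), ← hπ (e.symm y), e.apply_symm_apply, e.apply_symm_apply]
    exact hxy)
  refine ⟨L.map e, ?_, hL.nodup.map e.injective, ?_, ?_, ?_⟩
  · rw [List.isChain_map]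
    exact hL.chain.imp (fun a b hab => (hadj a b).1 hab)
  · intro w
    have : e.symm w ∈ L := hL.cover _
    simpa using ⟨e.symm w, this, e.apply_symm_apply w⟩
  · rw [List.head?_map, hL.hhead]; simp
  · rw [List.getLast?_map, hL.hlast]; simp

end Machinery


/-- the cycle graph on `ZMod k` -/
def cyc (k : ℕ) : SimpleGraph (ZMod k) where
  Adj i j := i ≠ j ∧ (i = j + 1 ∨ j = i + 1)
  symm := by constructor; rintro i j ⟨h1, h2⟩; exact ⟨h1.symm, h2.symm⟩
  loopless := ⟨fun i h => h.1 rfl⟩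

/-- product of a graph with the cycle `cyc k` -/
def PC {V : Type*} (H : SimpleGraph V) (k : ℕ) : SimpleGraph (V × ZMod k) where
  Adj p q := (p.1 = q.1 ∧ (cyc k).Adj p.2 q.2) ∨ (p.2 = q.2 ∧ H.Adj p.1 q.1)
  symm := by
    constructor
    rintro p q (⟨h1, h2⟩ | ⟨h1, h2⟩)
    exacts [Or.inl ⟨h1.symm, (cyc k).adj_symm h2⟩, Or.inr ⟨h1.symm, H.adj_symm h2⟩]
  loopless := by
    constructor
    rintro p (⟨_, h⟩ | ⟨_, h⟩)
    exacts [(cyc k).loopless.irrefl _ h, H.loopless.irrefl _ h]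

section Cyc
variable {k : ℕ} (hk : 4 ≤ k)

/-- parity of an element of `ZMod k` -/
def zpar {k : ℕ} (z : ZMod k) : ZMod 2 := z.cast

include hk in
lemma zmod_one_ne_zero : (1 : ZMod k) ≠ 0 := by
  haveI : Fact (1 < k) := ⟨by omega⟩
  exact one_ne_zero

include hk in
lemma cyc_adj_succ (z : ZMod k) : (cyc k).Adj z (z + 1) := by
  refine ⟨fun h => zmod_one_ne_zero hk ?_, Or.inr rfl⟩
  linear_combination -h

lemma zpar_hom (hk2 : 2 ∣ k) (z : ZMod k) : zpar z = ZMod.castHom hk2 (ZMod 2) z := by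
  simp [zpar, ZMod.castHom_apply]

lemma zpar_add (hk2 : 2 ∣ k) (a b : ZMod k) : zpar (a + b) = zpar a + zpar b := by
  rw [zpar_hom hk2, zpar_hom hk2, zpar_hom hk2]; exact map_add _ a b

lemma zpar_natCast (hk2 : 2 ∣ k) (m : ℕ) : zpar ((m : ℕ) : ZMod k) = (m : ZMod 2) := by
  rw [zpar_hom hk2]; exact map_natCast _ m

lemma zpar_one (hk2 : 2 ∣ k) : zpar (1 : ZMod k) = 1 := by
  rw [zpar_hom hk2]; exact map_one _

include hk in
lemma zpar_val (z : ZMod k) : zpar z = ((z.val : ℕ) : ZMod 2) := by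
  haveI : NeZero k := ⟨by omega⟩
  rw [zpar, ← ZMod.natCast_val]

end Cyc

section RangeMap
variable {A : Type*} {R : A → A → Prop}

lemma rm_head (f : ℕ → A) {m : ℕ} (hm : 0 < m) : ((List.range m).map f).head? = some (f 0) := by
  obtain ⟨m', rfl⟩ := Nat.exists_eq_succ_of_ne_zero hm.ne'
  rw [List.range_succ_eq_map]
  simp

lemma rm_last (f : ℕ → A) {m : ℕ} (hm : 0 < m) :
    ((List.range m).map f).getLast? = some (f (m - 1)) := by
  obtain ⟨m', rfl⟩ := Nat.exists_eq_succ_of_ne_zero hm.ne'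
  rw [List.range_succ]
  simp

lemma rm_chain (f : ℕ → A) {m : ℕ} (h : ∀ s, s + 1 < m → R (f s) (f (s + 1))) :
    List.IsChain R ((List.range m).map f) := by
  rw [List.isChain_iff_getElem]
  intro i hi
  simp only [List.length_map, List.length_range] at hi
  simp only [List.get_eq_getElem, List.getElem_map, List.getElem_range]
  exact h i (by omega)

lemma rm_nodup (f : ℕ → A) {m : ℕ} (h : ∀ s < m, ∀ t < m, f s = f t → s = t) :
    ((List.range m).map f).Nodup :=
  List.nodup_range.map_on (fun s hs t ht => h s (List.mem_range.1 hs) t (List.mem_range.1 ht))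

lemma rm_mem (f : ℕ → A) {m : ℕ} {a : A} : a ∈ (List.range m).map f ↔ ∃ s < m, f s = a := by
  simp

end RangeMap


section Blocks
variable {A : Type*} {R : A → A → Prop}

def blocks (F : ℕ → List A) (m : ℕ) : List A := ((List.range m).map F).flatten

lemma blocks_mem {F : ℕ → List A} {m : ℕ} {a : A} :
    a ∈ blocks F m ↔ ∃ j < m, a ∈ F j := by
  simp [blocks]

lemma blocks_head {F : ℕ → List A} {m : ℕ} {x : A} (hm : 0 < m)
    (h : (F 0).head? = some x) : (blocks F m).head? = some x := by
  obtain ⟨m', rfl⟩ := Nat.exists_eq_succ_of_ne_zero hm.ne'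
  rw [blocks, List.range_succ_eq_map]
  simp only [List.map_cons, List.flatten_cons, List.head?_append, h]
  rfl

lemma blocks_last {F : ℕ → List A} {m : ℕ} {y : A} (hm : 0 < m)
    (h : (F (m - 1)).getLast? = some y) : (blocks F m).getLast? = some y := by
  obtain ⟨m', rfl⟩ := Nat.exists_eq_succ_of_ne_zero hm.ne'
  rw [blocks, List.range_succ]
  simp only [List.map_append, List.map_cons, List.map_nil, List.flatten_concat,
    List.getLast?_append]
  rw [show m' + 1 - 1 = m' from rfl] at h
  rw [h]
  rfl

lemma blocks_chain {F : ℕ → List A} {m : ℕ}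
    (hne : ∀ j < m, F j ≠ [])
    (hc : ∀ j < m, List.IsChain R (F j))
    (hj : ∀ j, j + 1 < m → ∀ x ∈ (F j).getLast?, ∀ y ∈ (F (j + 1)).head?, R x y) :
    List.IsChain R (blocks F m) := by
  rw [blocks, List.isChain_flatten]
  · refine ⟨fun l hl => ?_, ?_⟩
    · obtain ⟨j, hj', rfl⟩ := by simpa using hl
      exact hc j hj'
    · rw [List.isChain_iff_getElem]
      intro i hi
      simp only [List.length_map, List.length_range] at hi
      simp only [List.get_eq_getElem, List.getElem_map, List.getElem_range]
      exact hj i (by omega)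
  · intro h
    obtain ⟨j, hj', hnil⟩ := by simpa using h
    exact hne j hj' hnil

lemma blocks_nodup {F : ℕ → List A} {m : ℕ}
    (hn : ∀ j < m, (F j).Nodup)
    (hd : ∀ i j, i < j → j < m → (F i).Disjoint (F j)) :
    (blocks F m).Nodup := by
  rw [blocks, List.nodup_flatten]
  constructor
  · intro l hl
    obtain ⟨j, hj', rfl⟩ := by simpa using hl
    exact hn j hj'
  · rw [List.pairwise_iff_getElem]
    intro i j hi hj hij
    simp only [List.length_map, List.length_range] at hi hj
    simp only [List.getElem_map, List.getElem_range]
    exact hd i j hij hj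

end Blocks

section Snake
variable {V : Type*} [DecidableEq V] {H : SimpleGraph V} {k : ℕ}

def colA (p : V) (a : ZMod k) (d : ℕ) : List (V × ZMod k) :=
  (List.range d).map fun s => (p, a + (s : ℕ))

lemma colA_ne_nil {p : V} {a : ZMod k} {d : ℕ} (hd : 0 < d) : colA p a d ≠ [] := by
  simp [colA, List.length_pos_iff, hd.ne']

lemma colA_head {p : V} {a : ZMod k} {d : ℕ} (hd : 0 < d) :
    (colA p a d).head? = some (p, a) := by
  rw [colA, rm_head _ hd]; simp

lemma colA_last {p : V} {a : ZMod k} {d : ℕ} (hd : 0 < d) :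
    (colA p a d).getLast? = some (p, a + ((d - 1 : ℕ) : ZMod k)) := by
  rw [colA, rm_last _ hd]

lemma colA_chain (hk : 4 ≤ k) (p : V) (a : ZMod k) (d : ℕ) :
    List.IsChain (PC H k).Adj (colA p a d) := by
  apply rm_chain
  intro s _
  refine Or.inl ⟨rfl, ?_⟩
  have : a + ((s + 1 : ℕ) : ZMod k) = (a + (s : ℕ)) + 1 := by push_cast; ring
  rw [this]
  exact cyc_adj_succ hk _

lemma colA_nodup (p : V) (a : ZMod k) {d : ℕ} (hdk : d ≤ k) :
    (colA p a d).Nodup := by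
  apply rm_nodup
  intro s hs t ht h
  have h2 : a + ((s : ℕ) : ZMod k) = a + ((t : ℕ) : ZMod k) := congrArg Prod.snd h
  have h' : ((s : ℕ) : ZMod k) = ((t : ℕ) : ZMod k) := add_left_cancel h2
  have := congrArg ZMod.val h'
  rwa [ZMod.val_natCast_of_lt (lt_of_lt_of_le hs hdk),
    ZMod.val_natCast_of_lt (lt_of_lt_of_le ht hdk)] at this

lemma colA_mem {p v : V} {a ℓ : ZMod k} {d : ℕ} :
    (v, ℓ) ∈ colA p a d ↔ v = p ∧ ∃ s < d, ℓ = a + (s : ℕ) := by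
  simp only [colA, List.mem_map, List.mem_range, Prod.mk.injEq]
  constructor
  · rintro ⟨s, hs, h1, h2⟩; exact ⟨h1.symm, s, hs, h2.symm⟩
  · rintro ⟨rfl, s, hs, rfl⟩; exact ⟨s, hs, rfl, rfl⟩

def sCol (b : Bool) (p : V) (a : ZMod k) (d : ℕ) : List (V × ZMod k) :=
  if b then colA p a d else (colA p a d).reverse

lemma sCol_ne_nil {b : Bool} {p : V} {a : ZMod k} {d : ℕ} (hd : 0 < d) : sCol b p a d ≠ [] := by
  cases b <;> simp [sCol] <;> simpa using colA_ne_nil hd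

lemma sCol_head {b : Bool} {p : V} {a : ZMod k} {d : ℕ} (hd : 0 < d) :
    (sCol b p a d).head? = some (p, if b then a else a + ((d - 1 : ℕ) : ZMod k)) := by
  cases b
  · rw [sCol, if_neg (by simp), List.head?_reverse, colA_last hd, if_neg (by simp)]
  · rw [sCol, if_pos rfl, colA_head hd, if_pos rfl]

lemma sCol_last {b : Bool} {p : V} {a : ZMod k} {d : ℕ} (hd : 0 < d) :
    (sCol b p a d).getLast? = some (p, if b then a + ((d - 1 : ℕ) : ZMod k) else a) := by
  cases b
  · rw [sCol, if_neg (by simp), List.getLast?_reverse, colA_head hd, if_neg (by simp)]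
  · rw [sCol, if_pos rfl, colA_last hd, if_pos rfl]

lemma sCol_chain (hk : 4 ≤ k) {b : Bool} (p : V) (a : ZMod k) (d : ℕ) :
    List.IsChain (PC H k).Adj (sCol b p a d) := by
  cases b
  · rw [sCol, if_neg (by simp), List.isChain_reverse]
    exact (colA_chain hk p a d).imp (fun x y h => (PC H k).adj_symm h)
  · rw [sCol, if_pos rfl]
    exact colA_chain hk p a d

lemma sCol_nodup {b : Bool} (p : V) (a : ZMod k) {d : ℕ} (hdk : d ≤ k) :
    (sCol b p a d).Nodup := by
  cases b
  · rw [sCol, if_neg (by simp)]; exact List.nodup_reverse.2 (colA_nodup p a hdk)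
  · rw [sCol, if_pos rfl]; exact colA_nodup p a hdk

lemma sCol_mem {b : Bool} {p v : V} {a ℓ : ZMod k} {d : ℕ} :
    (v, ℓ) ∈ sCol b p a d ↔ v = p ∧ ∃ s < d, ℓ = a + (s : ℕ) := by
  cases b
  · rw [sCol, if_neg (by simp), List.mem_reverse]; exact colA_mem
  · rw [sCol, if_pos rfl]; exact colA_mem

end Snake

section SnakeL
variable {V : Type*} [DecidableEq V] {H : SimpleGraph V} {k : ℕ}

def snakeL (e : ℕ → Bool) (P : List V) (x0 : V) (a : ZMod k) (d : ℕ) : List (V × ZMod k) :=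
  blocks (fun j => sCol (e j) (P.getD j x0) a d) P.length

variable {e : ℕ → Bool} {P : List V} {x0 : V} {a : ZMod k} {d : ℕ}

lemma snakeL_chain (hk : 4 ≤ k) (hd : 0 < d) (he : ∀ j, e (j + 1) = !e j)
    (hP : List.IsChain H.Adj P) : List.IsChain (PC H k).Adj (snakeL e P x0 a d) := by
  apply blocks_chain
  · intro j _; exact sCol_ne_nil hd
  · intro j _; exact sCol_chain hk _ _ _
  · intro j hj x hx y hy
    rw [sCol_last hd] at hx
    rw [sCol_head hd] at hy
    simp only [Option.mem_def, Option.some.injEq] at hx hy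
    subst hx; subst hy
    have hadj : H.Adj (P.getD j x0) (P.getD (j + 1) x0) := by
      rw [List.getD_eq_getElem _ _ (by omega), List.getD_eq_getElem _ _ (by omega)]
      have := List.isChain_iff_getElem.1 hP j (by omega)
      simpa using this
    rw [he j]
    cases e j
    · simp only [Bool.not_false, if_true, Bool.false_eq_true, if_false]
      exact Or.inr ⟨rfl, hadj⟩
    · simp only [Bool.not_true, if_true, Bool.false_eq_true, if_false]
      exact Or.inr ⟨rfl, hadj⟩

lemma snakeL_nodup (hdk : d ≤ k) (hPn : P.Nodup) : (snakeL e P x0 a d).Nodup := by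
  apply blocks_nodup
  · intro j _; exact sCol_nodup _ _ hdk
  · intro i j hij hj vl hvi hvj
    obtain ⟨v, ℓ⟩ := vl
    have h1 := (sCol_mem.1 hvi).1
    have h2 := (sCol_mem.1 hvj).1
    rw [List.getD_eq_getElem _ _ (by omega)] at h1
    rw [List.getD_eq_getElem _ _ (by omega)] at h2
    exact absurd (hPn.getElem_inj_iff.1 (h1 ▸ h2 : P[i] = P[j]).symm) (by omega)

lemma snakeL_mem {v : V} {ℓ : ZMod k} :
    (v, ℓ) ∈ snakeL e P x0 a d ↔ v ∈ P ∧ ∃ s < d, ℓ = a + (s : ℕ) := by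
  rw [snakeL, blocks_mem]
  constructor
  · rintro ⟨j, hj, hm⟩
    obtain ⟨rfl, hs⟩ := sCol_mem.1 hm
    rw [List.getD_eq_getElem _ _ hj]
    exact ⟨List.getElem_mem hj, hs⟩
  · rintro ⟨hv, hs⟩
    obtain ⟨j, hj, rfl⟩ := List.mem_iff_getElem.1 hv
    refine ⟨j, hj, sCol_mem.2 ⟨?_, hs⟩⟩
    rw [List.getD_eq_getElem _ _ hj]

lemma snakeL_head {x : V} (hd : 0 < d) (hx : P.head? = some x) :
    (snakeL e P x0 a d).head? =
      some (x, if e 0 then a else a + ((d - 1 : ℕ) : ZMod k)) := by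
  have hlen : 0 < P.length := by
    cases P with
    | nil => simp at hx
    | cons h t => simp
  apply blocks_head hlen
  rw [sCol_head hd, List.getD_eq_getElem _ _ hlen]
  rw [List.head?_eq_getElem?, List.getElem?_eq_getElem hlen, Option.some.injEq] at hx
  rw [hx]

lemma snakeL_last {y : V} (hd : 0 < d) (hy : P.getLast? = some y) :
    (snakeL e P x0 a d).getLast? =
      some (y, if e (P.length - 1) then a + ((d - 1 : ℕ) : ZMod k) else a) := by
  have hlen : 0 < P.length := by
    cases P with
    | nil => simp at hy
    | cons h t => simp
  apply blocks_last hlen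
  rw [sCol_last hd, List.getD_eq_getElem _ _ (by omega)]
  rw [List.getLast?_eq_getElem?, List.getElem?_eq_getElem (by omega), Option.some.injEq] at hy
  rw [hy]

end SnakeL

section Desc
variable {V : Type*} [DecidableEq V] {H : SimpleGraph V} {k : ℕ}

def descL (A : ℕ → List V) (a : ZMod k) (m : ℕ) : List (V × ZMod k) :=
  blocks (fun t => (A t).map fun v => (v, a - ((1 + t : ℕ) : ZMod k))) m

variable {A : ℕ → List V} {a : ZMod k} {m : ℕ} {E F : ℕ → V}

lemma descL_chain (hk : 4 ≤ k)
    (hA : ∀ t < m, HamList H (E t) (F t) (A t))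
    (hEF : ∀ t, t + 1 < m → E (t + 1) = F t) :
    List.IsChain (PC H k).Adj (descL A a m) := by
  apply blocks_chain
  · intro t ht
    intro hnil
    have := (hA t ht).hhead
    rw [List.map_eq_nil_iff] at hnil
    rw [hnil] at this
    simp at this
  · intro t ht
    rw [List.isChain_map]
    exact (hA t ht).chain.imp fun u v huv => Or.inr ⟨rfl, huv⟩
  · intro t ht xx hx yy hy
    rw [List.getLast?_map, (hA t (by omega)).hlast] at hx
    rw [List.head?_map, (hA (t + 1) ht).hhead] at hy
    simp only [Option.mem_def, Option.map_some, Option.some.injEq] at hx hy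
    subst hx; subst hy
    rw [hEF t ht]
    refine Or.inl ⟨rfl, ?_, Or.inl ?_⟩
    · intro h
      have : ((1 + t : ℕ) : ZMod k) = ((1 + (t + 1) : ℕ) : ZMod k) := by
        linear_combination -h
      have h1 : (1 : ZMod k) = 0 := by push_cast at this; linear_combination -this
      exact zmod_one_ne_zero hk h1
    · push_cast; ring
  
lemma descL_nodup (hmk : m ≤ k)
    (hA : ∀ t < m, HamList H (E t) (F t) (A t)) : (descL A a m).Nodup := by
  apply blocks_nodup
  · intro t ht
    exact (hA t ht).nodup.map (fun u v huv => congrArg Prod.fst huv)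
  · intro i j hij hj vl hvi hvj
    simp only [List.mem_map] at hvi hvj
    obtain ⟨u, _, rfl⟩ := hvi
    obtain ⟨w, _, hw⟩ := hvj
    have h2 : ((1 + j : ℕ) : ZMod k) = ((1 + i : ℕ) : ZMod k) :=  by
      have := congrArg Prod.snd hw
      simp only at this
      linear_combination -this
    have h3 : ((j - i : ℕ) : ZMod k) = 0 := by
      push_cast [Nat.cast_sub hij.le]
      push_cast at h2
      linear_combination h2
    haveI : NeZero k := ⟨by omega⟩
    rw [ZMod.natCast_eq_zero_iff] at h3
    have := Nat.le_of_dvd (by omega) h3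
    omega

lemma descL_mem {v : V} {ℓ : ZMod k}
    (hA : ∀ t < m, HamList H (E t) (F t) (A t)) :
    ((v, ℓ) ∈ descL A a m ↔ ∃ t < m, ℓ = a - ((1 + t : ℕ) : ZMod k)) := by
  rw [descL, blocks_mem]
  constructor
  · rintro ⟨t, ht, hm⟩
    simp only [List.mem_map, Prod.mk.injEq] at hm
    obtain ⟨u, _, _, h2⟩ := hm
    exact ⟨t, ht, h2.symm⟩
  · rintro ⟨t, ht, rfl⟩
    exact ⟨t, ht, List.mem_map.2 ⟨v, (hA t ht).cover v, rfl⟩⟩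

lemma descL_head (hm : 0 < m)
    (hA : ∀ t < m, HamList H (E t) (F t) (A t)) :
    (descL A a m).head? = some (E 0, a - 1) := by
  apply blocks_head hm
  rw [List.head?_map, (hA 0 hm).hhead]
  simp

lemma descL_last (hm : 0 < m)
    (hA : ∀ t < m, HamList H (E t) (F t) (A t)) :
    (descL A a m).getLast? = some (F (m - 1), a - ((1 + (m - 1) : ℕ) : ZMod k)) := by
  apply blocks_last hm
  rw [List.getLast?_map, (hA (m - 1) (by omega)).hlast]
  simp

end Desc

section Assembly
variable {V : Type*} [DecidableEq V] [Fintype V] {H : SimpleGraph V} {k : ℕ}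

lemma HamList.length_eq {G : SimpleGraph V} {x y : V} {L : List V} (h : HamList G x y L) :
    L.length = Fintype.card V := by
  have h1 : L.toFinset = Finset.univ :=
    Finset.eq_univ_iff_forall.2 fun v => List.mem_toFinset.2 (h.cover v)
  rw [← List.toFinset_card_of_nodup h.nodup, h1, Finset.card_univ]

lemma top_eq (hk : 4 ≤ k) (a : ZMod k) : (a + 1) + ((k - 1 : ℕ) : ZMod k) = a := by
  have h1 : ((k - 1 : ℕ) : ZMod k) = (k : ZMod k) - 1 := by
    push_cast [Nat.cast_sub (by omega : 1 ≤ k)]; ring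
  rw [h1, ZMod.natCast_self]; ring

lemma e1_alt : ∀ j, (fun j => decide (j % 2 = 1)) (j + 1) = !(fun j => decide (j % 2 = 1)) j := by
  intro j
  rcases Nat.mod_two_eq_zero_or_one j with h | h
  · have h1 : (j + 1) % 2 = 1 := by omega
    simp [h, h1]
  · have h1 : (j + 1) % 2 = 0 := by omega
    simp [h, h1]

lemma e2_alt : ∀ j, (fun j => decide (j % 2 = 0)) (j + 1) = !(fun j => decide (j % 2 = 0)) j := by
  intro j
  rcases Nat.mod_two_eq_zero_or_one j with h | h
  · have h1 : (j + 1) % 2 = 1 := by omega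
    simp [h, h1]
  · have h1 : (j + 1) % 2 = 0 := by omega
    simp [h, h1]

lemma same_layer_ham (hk : 4 ≤ k) (hcard : Even (Fintype.card V)) {x y : V} {P : List V}
    (hP : HamList H x y P) (a : ZMod k) :
    HamList (PC H k) (x, a) (y, a) (snakeL (fun j => decide (j % 2 = 1)) P x (a + 1) k) := by
  haveI : Nonempty V := ⟨x⟩
  haveI : NeZero k := ⟨by omega⟩
  have hlen := hP.length_eq
  have hpos : 0 < P.length := by rw [hlen]; exact Fintype.card_pos
  refine ⟨?_, ?_, ?_, ?_, ?_⟩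
  · exact snakeL_chain hk (by omega) e1_alt hP.chain
  · exact snakeL_nodup le_rfl hP.nodup
  · rintro ⟨v, ℓ⟩
    refine snakeL_mem.2 ⟨hP.cover v, (ℓ - (a + 1)).val, ZMod.val_lt _, ?_⟩
    rw [ZMod.natCast_val, ZMod.cast_id]; ring
  · rw [snakeL_head (by omega) hP.hhead]
    have h0 : decide (0 % 2 = 1) = false := by decide
    rw [h0]
    simp only [Bool.false_eq_true, if_false, top_eq hk a]
  · rw [snakeL_last (by omega) hP.hlast]
    rw [Nat.even_iff] at hcard
    have h0 : (P.length - 1) % 2 = 1 := by omega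
    rw [h0]
    rw [show decide ((1:ℕ) = 1) = true from by decide]
    simp only [if_true, top_eq hk a]

lemma arc_ham (hk : 4 ≤ k) (hcard : Even (Fintype.card V)) {x w v' : V} {P : List V}
    (hP : HamList H x w P) {dd : ℕ} (hd1 : 1 ≤ dd) (hdk : dd < k)
    {A : ℕ → List V} {E F : ℕ → V}
    (hA : ∀ t < k - dd, HamList H (E t) (F t) (A t))
    (hE0 : E 0 = w)
    (hEF : ∀ t, t + 1 < k - dd → E (t + 1) = F t)
    (hF : F (k - dd - 1) = v') (a : ZMod k) :
    HamList (PC H k) (x, a) (v', a + ((dd : ℕ) : ZMod k))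
      (snakeL (fun j => decide (j % 2 = 0)) P x a dd ++ descL A a (k - dd)) := by
  haveI : Nonempty V := ⟨x⟩
  haveI : NeZero k := ⟨by omega⟩
  have hlen := hP.length_eq
  have hpos : 0 < P.length := by rw [hlen]; exact Fintype.card_pos
  have hm : 0 < k - dd := by omega
  refine ⟨?_, ?_, ?_, ?_, ?_⟩
  · rw [List.isChain_append]
    refine ⟨snakeL_chain hk (by omega) e2_alt hP.chain, descL_chain hk hA hEF, ?_⟩
    intro xx hx yy hy
    rw [snakeL_last (by omega) hP.hlast] at hx
    rw [Nat.even_iff] at hcard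
    have h0 : (P.length - 1) % 2 = 1 := by omega
    rw [h0, show decide ((1:ℕ) = 0) = false from by decide] at hx
    simp only [Bool.false_eq_true, if_false, Option.mem_def, Option.some.injEq] at hx
    rw [descL_head hm hA, hE0] at hy
    simp only [Option.mem_def, Option.some.injEq] at hy
    subst hx; subst hy
    refine Or.inl ⟨rfl, ?_, Or.inl (by ring)⟩
    intro h
    exact zmod_one_ne_zero hk (by linear_combination h)
  · refine (snakeL_nodup (by omega) hP.nodup).append (descL_nodup (by omega) hA) ?_
    rintro ⟨v, ℓ⟩ hv1 hv2
    obtain ⟨-, s, hs, rfl⟩ := snakeL_mem.1 hv1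
    obtain ⟨t, ht, heq⟩ := (descL_mem hA).1 hv2
    have h3 : ((s + 1 + t : ℕ) : ZMod k) = 0 := by
      push_cast
      push_cast at heq
      linear_combination heq
    rw [ZMod.natCast_eq_zero_iff] at h3
    have := Nat.le_of_dvd (by omega) h3
    omega
  · rintro ⟨v, ℓ⟩
    set o := (ℓ - a).val with ho
    have hok : o < k := ZMod.val_lt _
    have hℓ : ℓ = a + ((o : ℕ) : ZMod k) := by
      rw [ho, ZMod.natCast_val, ZMod.cast_id]; ring
    by_cases hcase : o < dd
    · exact List.mem_append_left _ (snakeL_mem.2 ⟨hP.cover v, o, hcase, hℓ⟩)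
    · refine List.mem_append_right _ ?_
      refine (descL_mem (fun t ht => hA t ht)).2 ⟨k - 1 - o, by omega, ?_⟩
      have h1 : (1 + (k - 1 - o)) = k - o := by omega
      rw [h1]
      have h2 : ((k - o : ℕ) : ZMod k) = - ((o : ℕ) : ZMod k) := by
        push_cast [Nat.cast_sub (by omega : o ≤ k)]
        rw [ZMod.natCast_self]; ring
      rw [h2, hℓ]; ring
  · rw [List.head?_append, snakeL_head (by omega) hP.hhead]
    have h0 : decide (0 % 2 = 0) = true := by decide
    rw [h0]
    simp
  · rw [List.getLast?_append, descL_last hm hA, hF]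
    have h1 : (1 + (k - dd - 1)) = k - dd := by omega
    rw [h1]
    have h2 : a - ((k - dd : ℕ) : ZMod k) = a + ((dd : ℕ) : ZMod k) := by
      push_cast [Nat.cast_sub (by omega : dd ≤ k)]
      rw [ZMod.natCast_self]; ring
    rw [h2]
    rfl

end Assembly

section Step
variable {V : Type*} [DecidableEq V] [Fintype V] {H : SimpleGraph V} {k : ℕ}

lemma zmod2_ne {a b : ZMod 2} (h : a ≠ b) : a = b + 1 := by
  revert h; revert a b; decide

lemma zmod2_neg (a : ZMod 2) : -a = a := by revert a; decide

lemma lace_PC (hk : 4 ≤ k) (hk2 : 2 ∣ k) {π : V → ZMod 2}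
    (hbal : ∀ u : V, ∃ v, π v ≠ π u)
    (hcard : Even (Fintype.card V))
    (hlace : Lace H π) :
    Lace (PC H k) (fun p => π p.1 + zpar p.2) := by
  haveI : NeZero k := ⟨by omega⟩
  rintro ⟨u', aa⟩ ⟨v', bb⟩ hpar
  simp only at hpar
  by_cases hab : aa = bb
  · subst hab
    have hπ : π u' ≠ π v' := fun h => hpar (by rw [h])
    obtain ⟨P, hP⟩ := hlace u' v' hπ
    exact ⟨_, same_layer_ham hk hcard hP aa⟩
  · set dd := (bb - aa).val with hdd
    have hd1 : 1 ≤ dd := by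
      rcases Nat.eq_zero_or_pos dd with h | h
      · exfalso
        apply hab
        have h0 : bb - aa = 0 := by
          have := (ZMod.val_eq_zero (bb - aa)).1 h
          exact this
        have := sub_eq_zero.1 h0
        exact this.symm
      · exact h
    have hdk : dd < k := ZMod.val_lt _
    have hbba : bb = aa + ((dd : ℕ) : ZMod k) := by
      rw [hdd, ZMod.natCast_val, ZMod.cast_id]; ring
    set m := k - dd with hm
    have hm1 : 1 ≤ m := by omega
    -- target parity fact
    have hπv : π v' ≠ π u' + ((dd : ℕ) : ZMod 2) := by
      intro h
      apply hpar
      rw [hbba, zpar_add hk2, zpar_natCast hk2, h]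
      have h2 : ((dd : ℕ) : ZMod 2) + ((dd : ℕ) : ZMod 2) = 0 := by
        rw [← two_mul, show (2 : ZMod 2) = 0 from rfl, zero_mul]
      linear_combination -h2
    -- phase 1 endpoint
    obtain ⟨w, hw⟩ := hbal u'
    obtain ⟨P, hP⟩ := hlace u' w (fun h => hw h.symm)
    -- recursive layer paths
    set nxt : V → V := fun z => (hbal z).choose with hnxt
    have hnxts : ∀ z, π (nxt z) ≠ π z := fun z => (hbal z).choose_spec
    set E : ℕ → V := fun t => Nat.rec w (fun t Et => if t = m - 1 then v' else nxt Et) t with hE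
    have hE0 : E 0 = w := rfl
    have hEsucc : ∀ t, E (t + 1) = if t = m - 1 then v' else nxt (E t) := fun t => rfl
    have hparE : ∀ t, t ≤ m - 1 → π (E t) = π u' + ((1 + t : ℕ) : ZMod 2) := by
      intro t
      induction t with
      | zero =>
        intro _
        rw [hE0]
        have := zmod2_ne (fun h => hw h)
        simpa using this
      | succ t ih =>
        intro ht
        rw [hEsucc t, if_neg (by omega)]
        have h1 := zmod2_ne (hnxts (E t))
        rw [h1, ih (by omega)]
        push_cast
        ring
    have hneq : ∀ t, t < m → π (E t) ≠ π (E (t + 1)) := by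
      intro t ht
      by_cases hfin : t = m - 1
      · subst hfin
        rw [hEsucc, if_pos rfl]
        rw [hparE (m - 1) le_rfl]
        intro h
        apply hπv
        rw [h.symm]  
        congr 1
        have h2 : (1 + (m - 1)) = m := by omega
        rw [h2]
        have h3 : ((m : ℕ) : ZMod 2) = ((dd : ℕ) : ZMod 2) := by
          obtain ⟨c, hc⟩ := hk2
          have hmod : m % 2 = dd % 2 := by omega
          calc ((m : ℕ) : ZMod 2) = ((m % 2 : ℕ) : ZMod 2) := (ZMod.natCast_mod m 2).symm
            _ = ((dd % 2 : ℕ) : ZMod 2) := by rw [hmod]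
            _ = ((dd : ℕ) : ZMod 2) := ZMod.natCast_mod dd 2
        rw [h3]
      · rw [hEsucc, if_neg hfin]
        exact fun h => hnxts (E t) h.symm
    set A : ℕ → List V := fun t =>
      if h : t < m ∧ π (E t) ≠ π (E (t + 1)) then (hlace _ _ h.2).choose else [] with hA
    have hAspec : ∀ t < m, HamList H (E t) (E (t + 1)) (A t) := by
      intro t ht
      rw [hA]
      simp only
      rw [dif_pos ⟨ht, hneq t ht⟩]
      exact (hlace _ _ (hneq t ht)).choose_spec
    have hfinal : E ((m - 1) + 1) = v' := by rw [hEsucc, if_pos rfl]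
    have harc := arc_ham (F := fun t => E (t + 1)) hk hcard hP hd1 hdk hAspec hE0
      (fun t _ => rfl) hfinal aa
    rw [← hbba] at harc
    exact ⟨_, harc⟩

end Step

section CycHam
variable {k : ℕ}

lemma ham_transport {V W : Type*} {G : SimpleGraph V} {G' : SimpleGraph W} (e : V ≃ W)
    (hadj : ∀ u v, G.Adj u v ↔ G'.Adj (e u) (e v))
    {x y : V} {L : List V} (h : HamList G x y L) :
    HamList G' (e x) (e y) (L.map e) := by
  refine ⟨?_, h.nodup.map e.injective, ?_, ?_, ?_⟩
  · rw [List.isChain_map]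
    exact h.chain.imp fun a b hab => (hadj a b).1 hab
  · intro w
    have : e.symm w ∈ L := h.cover _
    simpa using ⟨e.symm w, this, e.apply_symm_apply w⟩
  · rw [List.head?_map, h.hhead]; rfl
  · rw [List.getLast?_map, h.hlast]; rfl

lemma unit_sq {ε : ZMod k} (hε : ε = 1 ∨ ε = -1) : ε * ε = 1 := by
  rcases hε with rfl | rfl <;> ring

lemma cyc_ham (hk : 4 ≤ k) (z : ZMod k) {ε : ZMod k} (hε : ε = 1 ∨ ε = -1) :
    HamList (cyc k) z (z - ε) ((List.range k).map fun s => z + ε * (s : ℕ)) := by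
  haveI : NeZero k := ⟨by omega⟩
  have hcancel : ∀ x : ZMod k, ε * x = 0 → x = 0 := by
    intro x hx
    have := congrArg (fun y => ε * y) hx
    simp only [mul_zero] at this
    rwa [← mul_assoc, unit_sq hε, one_mul] at this
  refine ⟨?_, ?_, ?_, ?_, ?_⟩
  · apply rm_chain
    intro s _
    have hne : z + ε * ((s : ℕ) : ZMod k) ≠ z + ε * (((s + 1 : ℕ) : ℕ) : ZMod k) := by
      intro h
      have h2 : ε * (1 : ZMod k) = 0 := by
        push_cast at h
        linear_combination -h
      exact zmod_one_ne_zero hk (hcancel _ h2)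
    rcases hε with rfl | rfl
    · refine ⟨hne, Or.inr ?_⟩
      push_cast
      ring
    · refine ⟨hne, Or.inl ?_⟩
      push_cast
      ring
  · apply rm_nodup
    intro s hs t ht h
    have h2 : ε * (((s : ℕ) : ZMod k) - ((t : ℕ) : ZMod k)) = 0 := by
      linear_combination h
    have h3 := hcancel _ h2
    have h4 : ((s : ℕ) : ZMod k) = ((t : ℕ) : ZMod k) := by linear_combination h3
    have := congrArg ZMod.val h4
    rwa [ZMod.val_natCast_of_lt hs, ZMod.val_natCast_of_lt ht] at this
  · intro v
    refine (rm_mem _).2 ⟨(ε * (v - z)).val, ZMod.val_lt _, ?_⟩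
    rw [ZMod.natCast_val, ZMod.cast_id, ← mul_assoc, unit_sq hε]
    ring
  · rw [rm_head _ (by omega : 0 < k)]
    simp
  · rw [rm_last _ (by omega : 0 < k)]
    have h1 : ((k - 1 : ℕ) : ZMod k) = -1 := by
      push_cast [Nat.cast_sub (by omega : 1 ≤ k)]
      rw [ZMod.natCast_self]; ring
    rw [h1]
    congr 1
    ring

lemma signs_exist (hk : 4 ≤ k) (hk2 : 2 ∣ k) (m : ℕ) (c : ZMod k)
    (hpar : c.val % 2 = m % 2) (hreach : c.val ≤ m ∨ k - c.val ≤ m) :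
    ∃ (ε : ℕ → ZMod k) (S : ℕ → ZMod k), (∀ t, ε t = 1 ∨ ε t = -1) ∧
      S 0 = 0 ∧ (∀ t, S (t + 1) = S t + ε t) ∧ S m = c := by
  haveI : NeZero k := ⟨by omega⟩
  have hcv : c.val < k := ZMod.val_lt _
  obtain ⟨c2, hc2⟩ := hk2
  -- choose p
  obtain ⟨p, hp2, hpm⟩ : ∃ p : ℕ, (2 * p = m + c.val ∨ 2 * p + k = m + c.val) ∧ p ≤ m := by
    rcases hreach with h | h
    · exact ⟨(m + c.val) / 2, Or.inl (by omega), by omega⟩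
    · exact ⟨(m + c.val - k) / 2, Or.inr (by omega), by omega⟩
  refine ⟨fun t => if t < p then 1 else -1,
    fun t => ((min t p : ℕ) : ZMod k) - ((t - p : ℕ) : ZMod k), ?_, by simp, ?_, ?_⟩
  · intro t
    dsimp only
    by_cases h : t < p
    · rw [if_pos h]; exact Or.inl rfl
    · rw [if_neg h]; exact Or.inr rfl
  · intro t
    dsimp only
    by_cases h : t < p
    · rw [if_pos h]
      have h1 : min (t + 1) p = min t p + 1 := by omega
      have h2 : t + 1 - p = t - p := by omega
      rw [h1, h2]
      push_cast
      ring
    · rw [if_neg h]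
      have h1 : min (t + 1) p = min t p := by omega
      have h2 : t + 1 - p = (t - p) + 1 := by omega
      rw [h1, h2]
      push_cast
      ring
  · dsimp only
    have h1 : min m p = p := by omega
    rw [h1]
    have hvc : ((c.val : ℕ) : ZMod k) = c := by rw [ZMod.natCast_val, ZMod.cast_id]
    have hks : ((k : ℕ) : ZMod k) = 0 := ZMod.natCast_self k
    rcases hp2 with h | h
    · have h2 : p = (m - p) + c.val := by omega
      have h3 := congrArg (Nat.cast : ℕ → ZMod k) h2
      rw [Nat.cast_add] at h3
      linear_combination h3 + hvc
    · have h2 : p + k = (m - p) + c.val := by omega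
      have h3 := congrArg (Nat.cast : ℕ → ZMod k) h2
      rw [Nat.cast_add, Nat.cast_add] at h3
      linear_combination h3 + hvc - hks

end CycHam

section Torus
variable {k : ℕ}

lemma neg_pm {ε : ZMod k} (hε : ε = 1 ∨ ε = -1) : -ε = 1 ∨ -ε = -1 := by
  rcases hε with rfl | rfl
  · right; ring
  · left; ring

lemma zpar_neg (hk : 4 ≤ k) (hk2 : 2 ∣ k) (z : ZMod k) : zpar (-z) = zpar z := by
  have h1 : zpar (-z) + zpar z = 0 := by
    rw [← zpar_add hk2, neg_add_cancel]
    have := zpar_natCast hk2 0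
    simpa using this
  have hdbl : zpar z + zpar z = 0 := by
    rw [← two_mul, show (2 : ZMod 2) = 0 from rfl, zero_mul]
  linear_combination h1 - hdbl

lemma cyc_adj_neg {i j : ZMod k} : (cyc k).Adj i j ↔ (cyc k).Adj (-i) (-j) := by
  constructor
  · rintro ⟨h1, h2 | h2⟩
    · exact ⟨fun h => h1 (neg_inj.1 h), Or.inr (by linear_combination h2)⟩
    · exact ⟨fun h => h1 (neg_inj.1 h), Or.inl (by linear_combination h2)⟩
  · rintro ⟨h1, h2 | h2⟩
    · exact ⟨fun h => h1 (by rw [h]), Or.inr (by linear_combination h2)⟩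
    · exact ⟨fun h => h1 (by rw [h]), Or.inl (by linear_combination h2)⟩

lemma torus_main (hk : 4 ≤ k) (hk2 : 2 ∣ k) {u' aa v' bb : ZMod k}
    (hpar : zpar u' + zpar aa ≠ zpar v' + zpar bb)
    (hab : aa ≠ bb)
    (hre : (v' - u').val ≤ k - (bb - aa).val + 1 ∨ (bb - aa).val - 1 ≤ (v' - u').val) :
    ∃ L, HamList (PC (cyc k) k) (u', aa) (v', bb) L := by
  haveI : NeZero k := ⟨by omega⟩
  set c : ZMod k := v' - u' with hc
  set dd : ℕ := (bb - aa).val with hdd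
  set cv : ℕ := c.val with hcv
  have hd1 : 1 ≤ dd := by
    rcases Nat.eq_zero_or_pos dd with h | h
    · exact absurd (sub_eq_zero.1 ((ZMod.val_eq_zero _).1 h)).symm hab
    · exact h
  have hdk : dd < k := ZMod.val_lt _
  have hcvk : cv < k := ZMod.val_lt _
  have hcard : Even (Fintype.card (ZMod k)) := by
    rw [ZMod.card k]
    obtain ⟨c2, hc2⟩ := hk2
    exact ⟨c2, by omega⟩
  set m : ℕ := k - dd + 1 with hm
  -- parity of cv vs m
  have hcd : ((cv : ℕ) : ZMod 2) ≠ ((dd : ℕ) : ZMod 2) := by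
    intro h
    apply hpar
    have h1 : v' = u' + c := by rw [hc]; ring
    have h2 : bb = aa + (bb - aa) := by ring
    rw [h1, h2, zpar_add hk2, zpar_add hk2]
    rw [zpar_val hk c, zpar_val hk (bb - aa), ← hcv, ← hdd, h]
    have hdbl : ((dd : ℕ) : ZMod 2) + ((dd : ℕ) : ZMod 2) = 0 := by
      rw [← two_mul, show (2 : ZMod 2) = 0 from rfl, zero_mul]
    linear_combination -hdbl
  have hparn : cv % 2 = m % 2 := by
    obtain ⟨c2, hc2⟩ := hk2
    have : cv % 2 ≠ dd % 2 := by
      intro h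
      apply hcd
      calc ((cv : ℕ) : ZMod 2) = ((cv % 2 : ℕ) : ZMod 2) := (ZMod.natCast_mod cv 2).symm
        _ = ((dd % 2 : ℕ) : ZMod 2) := by rw [h]
        _ = ((dd : ℕ) : ZMod 2) := ZMod.natCast_mod dd 2
    omega
  have hreach : cv ≤ m ∨ k - cv ≤ m := by
    rcases hre with h | h
    · left; omega
    · right; omega
  obtain ⟨ε, S, hεs, hS0, hSsucc, hSm⟩ := signs_exist hk hk2 m c hparn hreach
  -- phase 1 path
  have hP : HamList (cyc k) u' (u' + ε 0)
      ((List.range k).map fun s => u' + (-(ε 0)) * (s : ℕ)) := by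
    have := cyc_ham hk u' (neg_pm (hεs 0))
    rwa [sub_neg_eq_add] at this
  set E : ℕ → ZMod k := fun t => u' + S (t + 1) with hE
  have hA : ∀ t, t < k - dd → HamList (cyc k) (E t) (E (t + 1))
      ((List.range k).map fun s => E t + (-(ε (t + 1))) * (s : ℕ)) := by
    intro t _
    have h1 := cyc_ham hk (E t) (neg_pm (hεs (t + 1)))
    rw [sub_neg_eq_add] at h1
    have h2 : E t + ε (t + 1) = E (t + 1) := by
      rw [hE]
      dsimp only
      rw [hSsucc (t + 1)]
      ring
    rwa [h2] at h1
  have hE0 : E 0 = u' + ε 0 := by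
    rw [hE]; dsimp only; rw [hSsucc 0, hS0]; ring
  have hF : E ((k - dd - 1) + 1) = v' := by
    rw [hE]
    dsimp only
    have h1 : (k - dd - 1) + 1 + 1 = m := by omega
    rw [h1, hSm, hc]
    ring
  have harc := arc_ham hk hcard hP hd1 hdk hA hE0 (fun t _ => rfl) hF aa
  have hbb : aa + ((dd : ℕ) : ZMod k) = bb := by
    rw [hdd, ZMod.natCast_val, ZMod.cast_id]; ring
  rw [hbb] at harc
  exact ⟨_, harc⟩

lemma lace_torus (hk : 4 ≤ k) (hk2 : 2 ∣ k) :
    Lace (PC (cyc k) k) (fun p => zpar p.1 + zpar p.2) := by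
  haveI : NeZero k := ⟨by omega⟩
  have swap_adj : ∀ p q : ZMod k × ZMod k,
      (PC (cyc k) k).Adj p q ↔
        (PC (cyc k) k).Adj (Equiv.prodComm (ZMod k) (ZMod k) p) (Equiv.prodComm (ZMod k) (ZMod k) q) := by
    rintro ⟨p1, p2⟩ ⟨q1, q2⟩
    exact or_comm
  have neg_equiv : ∀ p q : ZMod k × ZMod k,
      (PC (cyc k) k).Adj p q ↔
        (PC (cyc k) k).Adj ((Equiv.refl (ZMod k)).prodCongr (Equiv.neg (ZMod k)) p)
          ((Equiv.refl (ZMod k)).prodCongr (Equiv.neg (ZMod k)) q) := by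
    rintro ⟨p1, p2⟩ ⟨q1, q2⟩
    show ((PC (cyc k) k).Adj (p1, p2) (q1, q2)) ↔ ((PC (cyc k) k).Adj (p1, -p2) (q1, -q2))
    constructor
    · rintro (⟨h1, h2⟩ | ⟨h1, h2⟩)
      · exact Or.inl ⟨h1, cyc_adj_neg.1 h2⟩
      · exact Or.inr ⟨congrArg Neg.neg h1, h2⟩
    · rintro (⟨h1, h2⟩ | ⟨h1, h2⟩)
      · exact Or.inl ⟨h1, cyc_adj_neg.2 h2⟩
      · exact Or.inr ⟨neg_inj.1 h1, h2⟩
  rintro ⟨u', aa⟩ ⟨v', bb⟩ hpar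
  simp only at hpar
  by_cases hab : aa = bb
  · subst hab
    have huv : u' ≠ v' := by
      intro h; exact hpar (by rw [h])
    have hpar' : zpar aa + zpar u' ≠ zpar aa + zpar v' := by
      intro h
      apply hpar
      linear_combination h
    have hre' : (aa - aa).val ≤ k - (v' - u').val + 1 ∨ (v' - u').val - 1 ≤ (aa - aa).val := by
      left
      simp [sub_self]
    obtain ⟨L, hL⟩ := torus_main hk hk2 hpar' huv hre'
    have := ham_transport (Equiv.prodComm (ZMod k) (ZMod k)) swap_adj hL
    exact ⟨_, this⟩
  · by_cases hre : (v' - u').val ≤ k - (bb - aa).val + 1 ∨ (bb - aa).val - 1 ≤ (v' - u').val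
    · exact torus_main hk hk2 hpar hab hre
    · push_neg at hre
      obtain ⟨hre1, hre2⟩ := hre
      have hd1 : bb - aa ≠ 0 := sub_ne_zero.2 (Ne.symm hab)
      have hnegval : ((-bb) - (-aa)).val = k - (bb - aa).val := by
        have h1 : (-bb) - (-aa) = -(bb - aa) := by ring
        rw [h1, ZMod.neg_val, if_neg hd1]
      have hpar' : zpar u' + zpar (-aa) ≠ zpar v' + zpar (-bb) := by
        rw [zpar_neg hk hk2, zpar_neg hk hk2]
        exact hpar
      have hab' : -aa ≠ -bb := fun h => hab (neg_inj.1 h)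
      have hre' : (v' - u').val ≤ k - ((-bb) - (-aa)).val + 1 ∨
          ((-bb) - (-aa)).val - 1 ≤ (v' - u').val := by
        left
        rw [hnegval]
        have := ZMod.val_lt (bb - aa)
        omega
      obtain ⟨L, hL⟩ := torus_main hk hk2 hpar' hab' hre'
      have := ham_transport ((Equiv.refl (ZMod k)).prodCongr (Equiv.neg (ZMod k))) neg_equiv hL
      simp only [Equiv.prodCongr_apply, Equiv.coe_refl, Prod.map, id_eq, Equiv.neg_apply,
        neg_neg] at this
      exact ⟨_, this⟩

end Torus

section Glue
variable {k : ℕ}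

lemma parity_eq_sum (hk : 4 ≤ k) {n : ℕ} (u : Fin n → ZMod k) :
    parity u = ∑ i, zpar (u i) := by
  rw [parity, Nat.cast_sum]
  exact Finset.sum_congr rfl fun i _ => (zpar_val hk (u i)).symm

def dEquiv (n k : ℕ) : (Fin (n + 1) → ZMod k) ≃ ((Fin n → ZMod k) × ZMod k) where
  toFun u := (Fin.tail u, u 0)
  invFun p := Fin.cons p.2 p.1
  left_inv u := by
    funext x
    cases x using Fin.cases with
    | zero => simp
    | succ i => simp [Fin.tail]
  right_inv p := by
    refine Prod.ext ?_ ?_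
    · funext i; simp [Fin.tail]
    · simp

lemma decomp_parity (hk : 4 ≤ k) {n : ℕ} (u : Fin (n + 1) → ZMod k) :
    parity u = parity (Fin.tail u) + zpar (u 0) := by
  rw [parity_eq_sum hk, parity_eq_sum hk, Fin.sum_univ_succ]
  rw [add_comm]
  rfl

lemma funext_succ {n : ℕ} {u v : Fin (n + 1) → ZMod k}
    (h0 : u 0 = v 0) (ht : Fin.tail u = Fin.tail v) : u = v := by
  funext x
  cases x using Fin.cases with
  | zero => exact h0
  | succ i => exact congrFun ht i

lemma decomp_adj (hk : 4 ≤ k) {n : ℕ} (u v : Fin (n + 1) → ZMod k) :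
    (karyCube (n + 1) k).Adj u v ↔
      (PC (karyCube n k) k).Adj (Fin.tail u, u 0) (Fin.tail v, v 0) := by
  constructor
  · rintro ⟨hne, j, hj, hrest⟩
    cases j using Fin.cases with
    | zero =>
      refine Or.inl ⟨?_, ?_, hj⟩
      · funext i
        exact hrest i.succ (Fin.succ_ne_zero i)
      · intro h
        apply hne
        refine funext_succ h ?_
        funext i
        exact hrest i.succ (Fin.succ_ne_zero i)
    | succ i =>
      refine Or.inr ⟨hrest 0 (Fin.succ_ne_zero i).symm, ?_, i, hj, ?_⟩
      · intro h
        apply hne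
        exact funext_succ (hrest 0 (Fin.succ_ne_zero i).symm) h
      · intro i' hi'
        exact hrest i'.succ (fun h => hi' (Fin.succ_injective n h))
  · rintro (⟨h1, h2, h3⟩ | ⟨h1, h2, i, h3, h4⟩)
    · refine ⟨?_, 0, h3, ?_⟩
      · intro h
        rw [h] at h2
        exact h2 rfl
      · intro i hi
        obtain ⟨i', rfl⟩ := Fin.exists_succ_eq.2 hi
        exact congrFun h1 i'
    · refine ⟨?_, i.succ, h3, ?_⟩
      · intro h
        rw [h] at h2
        exact h2 rfl
      · intro i' hi'
        cases i' using Fin.cases with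
        | zero => exact h1
        | succ i'' => exact h4 i'' (fun h => hi' (by rw [h]))

lemma kary1_adj (hk : 4 ≤ k) (u v : Fin 1 → ZMod k) :
    (karyCube 1 k).Adj u v ↔ (cyc k).Adj (u 0) (v 0) := by
  constructor
  · rintro ⟨hne, j, hj, -⟩
    have hj0 : j = 0 := Subsingleton.elim j 0
    subst hj0
    refine ⟨fun h => hne (funext fun i => ?_), hj⟩
    have hi : i = 0 := Subsingleton.elim i 0
    rw [hi, h]
  · rintro ⟨h1, h2⟩
    refine ⟨fun h => h1 (by rw [h]), 0, h2, fun i hi => absurd (Subsingleton.elim i 0) hi⟩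

lemma kary1_parity (hk : 4 ≤ k) (z : ZMod k) :
    parity (fun _ : Fin 1 => z) = zpar z := by
  rw [parity_eq_sum hk]
  simp

def e1Equiv (k : ℕ) : (ZMod k) ≃ (Fin 1 → ZMod k) where
  toFun z := fun _ => z
  invFun u := u 0
  left_inv z := rfl
  right_inv u := by funext i; have : i = 0 := Subsingleton.elim i 0; rw [this]

lemma parity_update (hk : 4 ≤ k) {n : ℕ} (u : Fin n → ZMod k) (j : Fin n) (z : ZMod k) :
    parity (Function.update u j z) = parity u - zpar (u j) + zpar z := by
  rw [parity_eq_sum hk, parity_eq_sum hk]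
  have h1 : ∑ i, zpar (Function.update u j z i) =
      zpar z + ∑ i ∈ Finset.univ \ {j}, zpar (u i) := by
    rw [← Finset.sum_update_of_mem (Finset.mem_univ j)]
    apply Finset.sum_congr rfl
    intro i _
    by_cases h : i = j
    · subst h; rw [Function.update_self, Function.update_self]
    · rw [Function.update_of_ne h, Function.update_of_ne h]
  have h2 : ∑ i, zpar (u i) = (∑ i ∈ Finset.univ \ {j}, zpar (u i)) + zpar (u j) := by
    rw [Finset.sum_eq_sum_sdiff_singleton_add (Finset.mem_univ j)]
  rw [h1, h2]
  ring

lemma lace_kary (hk : 4 ≤ k) (hk2 : 2 ∣ k) :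
    ∀ n : ℕ, Lace (karyCube (n + 2) k) parity := by
  haveI : NeZero k := ⟨by omega⟩
  have hcard : ∀ m : ℕ, 1 ≤ m → Even (Fintype.card (Fin m → ZMod k)) := by
    intro m hm
    have h1 : Fintype.card (Fin m → ZMod k) = k ^ m := by
      rw [Fintype.card_fun, ZMod.card, Fintype.card_fin]
    rw [h1]
    obtain ⟨c, hc⟩ := dvd_pow hk2 (by omega : m ≠ 0)
    exact ⟨c, by omega⟩
  have hbal : ∀ m : ℕ, 1 ≤ m → ∀ u : Fin m → ZMod k, ∃ v : Fin m → ZMod k, parity v ≠ parity u := by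
    intro m hm u
    have hj : 0 < m := by omega
    set j : Fin m := ⟨0, hj⟩ with hjdef
    refine ⟨Function.update u j (u j + 1), ?_⟩
    rw [parity_update hk, zpar_add hk2, zpar_one hk2]
    intro h
    have h1 : (1 : ZMod 2) = 0 := by linear_combination h
    exact one_ne_zero h1
  have hlift : ∀ m : ℕ, Lace (PC (karyCube m k) k) (fun p => parity p.1 + zpar p.2) →
      Lace (karyCube (m + 1) k) parity := by
    intro m hPC
    refine Lace.transport (dEquiv m k).symm ?_ ?_ hPC
    · intro p q
      have h1 := decomp_adj hk ((dEquiv m k).symm p) ((dEquiv m k).symm q)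
      have h2 : (Fin.tail ((dEquiv m k).symm p), ((dEquiv m k).symm p) 0) = p :=
        (dEquiv m k).apply_symm_apply p
      have h3 : (Fin.tail ((dEquiv m k).symm q), ((dEquiv m k).symm q) 0) = q :=
        (dEquiv m k).apply_symm_apply q
      rw [h2, h3] at h1
      exact h1.symm
    · intro p
      have h1 := decomp_parity hk ((dEquiv m k).symm p)
      have h2 : (Fin.tail ((dEquiv m k).symm p), ((dEquiv m k).symm p) 0) = p :=
        (dEquiv m k).apply_symm_apply p
      rw [h1]
      rw [show Fin.tail ((dEquiv m k).symm p) = p.1 from congrArg Prod.fst h2,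
        show ((dEquiv m k).symm p) 0 = p.2 from congrArg Prod.snd h2]
  have hbase : Lace (karyCube 2 k) parity := by
    apply hlift 1
    refine Lace.transport ((e1Equiv k).prodCongr (Equiv.refl (ZMod k))) ?_ ?_ (lace_torus hk hk2)
    · rintro ⟨p1, p2⟩ ⟨q1, q2⟩
      show _ ↔ (PC (karyCube 1 k) k).Adj (fun _ => p1, p2) (fun _ => q1, q2)
      constructor
      · rintro (⟨h1, h2⟩ | ⟨h1, h2⟩)
        · exact Or.inl ⟨congrArg (fun z => fun _ : Fin 1 => z) h1, h2⟩
        · exact Or.inr ⟨h1, (kary1_adj hk _ _).2 h2⟩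
      · rintro (⟨h1, h2⟩ | ⟨h1, h2⟩)
        · exact Or.inl ⟨congrFun h1 0, h2⟩
        · exact Or.inr ⟨h1, (kary1_adj hk _ _).1 h2⟩
    · rintro ⟨p1, p2⟩
      show parity (fun _ => p1) + zpar p2 = zpar p1 + zpar p2
      rw [kary1_parity hk]
  intro n
  induction n with
  | zero => exact hbase
  | succ n ih => exact hlift (n + 2) (lace_PC hk hk2 (hbal (n + 2) (by omega)) (hcard (n + 2) (by omega)) ih)

end Glue

/-- For `n ≥ 2` and even `k ≥ 4`, any two vertices of different parities in `Q_n^k`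
are joined by a Hamiltonian path. -/
theorem stmt9 (n k : ℕ) (hn : 2 ≤ n) (hk : 4 ≤ k) (hke : Even k)
    (x y : Fin n → ZMod k) (hpar : parity x ≠ parity y) :
    ∃ p : (karyCube n k).Walk x y, p.IsPath ∧ p.IsHamiltonian := by
  have hk2 : 2 ∣ k := by
    obtain ⟨c, hc⟩ := hke
    exact ⟨c, by omega⟩
  obtain ⟨m, rfl⟩ : ∃ m, n = m + 2 := ⟨n - 2, by omega⟩
  obtain ⟨L, hL⟩ := lace_kary hk hk2 m x y hpar
  exact hL.toWalk
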